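/- For any communicating class C, the lift Δ̄_C is isolated for the shift flow with isolation constant 1/4: if g ∈ Δ̄ satisfies ψ(t,g) stays within distance 1/4 of Δ̄_C for all t ∈ ℝ, then g ∈ Δ̄_C. More precisely, if g ∉ Δ̄_C, then there exists t_0 ∈ ℝ such that d(ψ(t_0,g), f) > 1/4 for every f ∈ Δ̄_C. -/

import Mathlib

open MeasureTheory

def PC (S : Type*) (h : ℝ) : Set (ℝ → S) :=
  {x | ∀ n : ℤ, ∀ t ∈ Set.Ico ((n : ℝ) * h) (((n : ℝ) + 1) * h), x t = x ((n : ℝ) * h)}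

/-- Aligned admissible functions (`Δ̄`). -/
def Adm {S : Type*} (E : S → S → Prop) (h : ℝ) : Set (ℝ → S) :=
  {x | x ∈ PC S h ∧ ∀ n : ℤ, E (x ((n : ℝ) * h)) (x (((n : ℝ) + 1) * h))}

noncomputable def dd {S : Type*} [DecidableEq S] (h : ℝ) (x y : ℝ → S) : ℝ :=
  ∑' i : ℤ,
    ((1 / h) * ∫ t in (i : ℝ) * h..((i : ℝ) + 1) * h, (if x t = y t then (0 : ℝ) else 1)) /
      4 ^ i.natAbs

def IsCommClass {V : Type*} (E : V → V → Prop) (C : Set V) : Prop :=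
  (∀ a ∈ C, ∀ b ∈ C, Relation.ReflTransGen E a b) ∧
  ∀ C' : Set V, C ⊆ C' → (∀ a ∈ C', ∀ b ∈ C', Relation.ReflTransGen E a b) → C' = C

lemma integral_pc {S : Type*} [DecidableEq S] {h : ℝ} (hh : 0 < h) (x y : ℝ → S)
    (hx : x ∈ PC S h) (hy : y ∈ PC S h) (i : ℤ) :
    ∫ t in (i : ℝ) * h..((i : ℝ) + 1) * h, (if x t = y t then (0 : ℝ) else 1) =
      (if x ((i : ℝ) * h) = y ((i : ℝ) * h) then (0 : ℝ) else 1) * h := by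
  have hle : (i : ℝ) * h ≤ ((i : ℝ) + 1) * h := by nlinarith
  rw [intervalIntegral.integral_congr_ae
    (g := fun _ => (if x ((i : ℝ) * h) = y ((i : ℝ) * h) then (0 : ℝ) else 1)) ?_]
  · rw [intervalIntegral.integral_const]
    rw [smul_eq_mul]; ring
  · have hae : ∀ᵐ t : ℝ, t ≠ ((i : ℝ) + 1) * h := by
      refine ae_iff.mpr ?_
      simp only [ne_eq, not_not, Set.setOf_eq_eq_singleton]
      exact Real.volume_singleton
    filter_upwards [hae] with t ht htmem
    rw [Set.uIoc_of_le hle] at htmem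
    have htI : t ∈ Set.Ico ((i : ℝ) * h) (((i : ℝ) + 1) * h) :=
      ⟨le_of_lt htmem.1, lt_of_le_of_ne htmem.2 ht⟩
    rw [hx i t htI, hy i t htI]

/-- The lift `Δ̄_C` is isolated with isolation constant `1/4`: if `g ∈ Δ̄` does not
take values only in `C`, some shift of `g` is at distance `> 1/4` from all of `Δ̄_C`. -/
theorem lift_isolated {V : Type*} [Fintype V] [DecidableEq V] (E : V → V → Prop)
    (hout : ∀ v : V, ∃ w : V, E v w) (hin : ∀ v : V, ∃ w : V, E w v)
    (h : ℝ) (hh : 0 < h) (C : Set V) (hC : IsCommClass E C)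
    (g : ℝ → V) (hg : g ∈ Adm E h) (hgC : ¬ ∀ t : ℝ, g t ∈ C) :
    ∃ t₀ : ℝ, ∀ f : ℝ → V, f ∈ Adm E h → (∀ t : ℝ, f t ∈ C) →
      dd h (fun s => g (s + t₀)) f > 1 / 4 := by
  push_neg at hgC
  obtain ⟨t, htC⟩ := hgC
  set n : ℤ := ⌊t / h⌋ with hn
  have htI : t ∈ Set.Ico ((n : ℝ) * h) (((n : ℝ) + 1) * h) := by
    constructor
    · have := Int.floor_le (t / h)
      calc (n : ℝ) * h ≤ (t / h) * h := by nlinarith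
        _ = t := by field_simp
    · have := Int.lt_floor_add_one (t / h)
      calc t = (t / h) * h := by field_simp
        _ < ((n : ℝ) + 1) * h := by nlinarith
  have hgn : g ((n : ℝ) * h) ∉ C := by rw [← hg.1 n t htI]; exact htC
  refine ⟨(n : ℝ) * h, fun f hf hfC => ?_⟩
  set g' : ℝ → V := fun s => g (s + (n : ℝ) * h) with hg'
  have hg'PC : g' ∈ PC V h := by
    intro i s hs
    have h1 : s + (n : ℝ) * h ∈
        Set.Ico (((i + n : ℤ) : ℝ) * h) ((((i + n : ℤ) : ℝ) + 1) * h) := by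
      constructor
      · push_cast; nlinarith [hs.1]
      · push_cast; nlinarith [hs.2]
    have h2 : (i : ℝ) * h + (n : ℝ) * h = ((i + n : ℤ) : ℝ) * h := by push_cast; ring
    show g (s + (n : ℝ) * h) = g ((i : ℝ) * h + (n : ℝ) * h)
    rw [hg.1 (i + n) _ h1, h2]
  -- each term equals F i
  set F : ℤ → ℝ := fun i =>
    (if g' ((i : ℝ) * h) = f ((i : ℝ) * h) then (0 : ℝ) else 1) / 4 ^ i.natAbs with hF
  have hterm : ∀ i : ℤ,
      ((1 / h) * ∫ t in (i : ℝ) * h..((i : ℝ) + 1) * h,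
        (if g' t = f t then (0 : ℝ) else 1)) / 4 ^ i.natAbs = F i := by
    intro i
    rw [integral_pc hh g' f hg'PC hf.1 i]
    simp only [hF]
    split_ifs
    · simp
    · rw [one_mul]
      field_simp
  have hsumG : Summable (fun i : ℤ => ((1 : ℝ) / 4) ^ i.natAbs) := by
    apply Summable.of_nat_of_neg
    · simpa using summable_geometric_of_lt_one (by norm_num : (0:ℝ) ≤ 1/4) (by norm_num)
    · simpa using summable_geometric_of_lt_one (by norm_num : (0:ℝ) ≤ 1/4) (by norm_num)
  have hFle : ∀ i : ℤ, F i ≤ ((1 : ℝ) / 4) ^ i.natAbs := by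
    intro i
    simp only [hF, div_pow, one_pow]
    split_ifs
    · rw [zero_div]; positivity
    · exact le_rfl
  have hFnn : ∀ i : ℤ, 0 ≤ F i := by
    intro i; simp only [hF]; split_ifs <;> positivity
  have hsumF : Summable F := Summable.of_nonneg_of_le hFnn hFle hsumG
  have hdd : dd h g' f = ∑' i, F i := by
    unfold dd
    exact tsum_congr hterm
  have hF0 : F 0 = 1 := by
    have hne : g' ((0 : ℤ) * h) ≠ f ((0 : ℤ) * h) := by
      intro heq
      apply hgn
      have : g' ((0 : ℤ) * h) = g ((n : ℝ) * h) := by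
        show g ((0 : ℤ) * h + (n : ℝ) * h) = g ((n : ℝ) * h)
        norm_num
      rw [← this, heq]
      exact hfC _
    simp only [hF, Int.natAbs_zero, pow_zero, div_one]
    rw [if_neg]
    intro heq; exact hne (by simpa using heq)
  have hle : F 0 ≤ ∑' i, F i := Summable.le_tsum hsumF 0 (fun i _ => hFnn i)
  rw [hdd]
  rw [hF0] at hle
  linarith
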